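/- Let n ≥ 1 and let B and C be nonzero positive semidefinite n×n complex matrices. Then Tr(BC) = Tr(B) · Tr(C) holds if and only if there exist a unit vector v ∈ ℂⁿ and real numbers β > 0 and γ > 0 such that B = β · v vᴴ and C = γ · v vᴴ, i.e. if and only if B and C are both positive scalar multiples of a common rank-one orthogonal projection. -/

import Mathlib

open Matrix ComplexOrder

section Aux

variable {n : ℕ}

open scoped MatrixOrder

private lemma trace_eq_sum_eig' {A : Matrix (Fin n) (Fin n) ℂ} (hA : A.IsHermitian) :
    A.trace = ((∑ i, hA.eigenvalues i : ℝ) : ℂ) := by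
  conv_lhs => rw [hA.spectral_theorem, Unitary.conjStarAlgAut_apply]
  rw [trace_mul_cycle, (Matrix.mem_unitaryGroup_iff').mp hA.eigenvectorUnitary.2,
    one_mul, trace_diagonal]
  push_cast
  simp [Function.comp]

private lemma psd_trace_zero' {A : Matrix (Fin n) (Fin n) ℂ} (hA : A.PosSemidef)
    (h : A.trace = 0) : A = 0 := by
  have h1 := trace_eq_sum_eig' hA.1
  rw [h] at h1
  have h2 : ∑ i, hA.1.eigenvalues i = 0 := by exact_mod_cast h1.symm
  have h3 : ∀ i ∈ Finset.univ, hA.1.eigenvalues i = 0 :=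
    (Finset.sum_eq_zero_iff_of_nonneg (fun i _ => hA.eigenvalues_nonneg i)).mp h2
  have h4 : Matrix.diagonal (RCLike.ofReal ∘ hA.1.eigenvalues) = (0 : Matrix (Fin n) (Fin n) ℂ) := by
    ext i j
    rcases eq_or_ne i j with rfl | hij
    · simp [h3 i (Finset.mem_univ i)]
    · simp [Matrix.diagonal_apply_ne _ hij]
  have := hA.1.spectral_theorem
  rw [h4, map_zero] at this
  exact this

private lemma psd_trace_pos' {A : Matrix (Fin n) (Fin n) ℂ} (hA : A.PosSemidef) (h0 : A ≠ 0) :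
    ∃ r : ℝ, 0 < r ∧ A.trace = (r : ℂ) := by
  refine ⟨∑ i, hA.1.eigenvalues i, ?_, trace_eq_sum_eig' hA.1⟩
  rcases lt_or_eq_of_le (Finset.sum_nonneg fun i _ => hA.eigenvalues_nonneg i) with h | h
  · exact h
  · exact absurd (psd_trace_zero' hA (by rw [trace_eq_sum_eig' hA.1, ← h]; simp)) h0

private lemma smul_one_sub_psd' {A : Matrix (Fin n) (Fin n) ℂ} (hA : A.PosSemidef) :
    (A.trace • (1 : Matrix (Fin n) (Fin n) ℂ) - A).PosSemidef := by
  set c : ℝ := ∑ i, hA.1.eigenvalues i with hc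
  have htr : A.trace = (c : ℂ) := trace_eq_sum_eig' hA.1
  have key : A.trace • (1 : Matrix (Fin n) (Fin n) ℂ) - A
      = (hA.1.eigenvectorUnitary : Matrix (Fin n) (Fin n) ℂ)
        * Matrix.diagonal (RCLike.ofReal ∘ fun i => c - hA.1.eigenvalues i)
        * (hA.1.eigenvectorUnitary : Matrix (Fin n) (Fin n) ℂ)ᴴ := by
    have hd : Matrix.diagonal (RCLike.ofReal ∘ fun i => c - hA.1.eigenvalues i)
        = (c : ℂ) • (1 : Matrix (Fin n) (Fin n) ℂ)
          - Matrix.diagonal (RCLike.ofReal ∘ hA.1.eigenvalues) := by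
      ext i j
      rcases eq_or_ne i j with rfl | hij
      · simp
      · simp [Matrix.diagonal_apply_ne _ hij, Matrix.one_apply_ne hij]
    rw [hd, mul_sub, sub_mul, htr]
    congr 1
    · rw [Matrix.mul_smul, mul_one, Matrix.smul_mul, ← Matrix.star_eq_conjTranspose,
        (Matrix.mem_unitaryGroup_iff).mp hA.1.eigenvectorUnitary.2]
    · rw [← Matrix.star_eq_conjTranspose]
      have := hA.1.spectral_theorem
      rw [Unitary.conjStarAlgAut_apply] at this
      exact this
  rw [key]
  apply Matrix.PosSemidef.mul_mul_conjTranspose_same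
  refine Matrix.posSemidef_diagonal_iff.mpr fun i => ?_
  rw [Function.comp_apply, RCLike.ofReal_nonneg, sub_nonneg, hc]
  exact Finset.single_le_sum (fun j _ => hA.eigenvalues_nonneg j) (Finset.mem_univ i)

private lemma mul_eq_zero_of_trace_mul_zero' {A D : Matrix (Fin n) (Fin n) ℂ}
    (hA : A.PosSemidef) (hD : D.PosSemidef) (h : (A * D).trace = 0) : A * D = 0 := by
  have hS : CFC.sqrt D * CFC.sqrt D = D := CFC.sqrt_mul_sqrt_self D hD.nonneg
  have hSH : (CFC.sqrt D).IsHermitian := (CFC.sqrt_nonneg D).posSemidef.1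
  have hR : CFC.sqrt A * CFC.sqrt A = A := CFC.sqrt_mul_sqrt_self A hA.nonneg
  have hRH : (CFC.sqrt A).IsHermitian := (CFC.sqrt_nonneg A).posSemidef.1
  have hT : (CFC.sqrt D * A * CFC.sqrt D).PosSemidef := by
    have := hA.mul_mul_conjTranspose_same (CFC.sqrt D)
    rwa [hSH.eq] at this
  have htr : (CFC.sqrt D * A * CFC.sqrt D).trace = 0 := by
    rw [trace_mul_cycle, hS, trace_mul_comm]
    exact h
  have hz : CFC.sqrt D * A * CFC.sqrt D = 0 := psd_trace_zero' hT htr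
  have hz2 : (CFC.sqrt A * CFC.sqrt D)ᴴ * (CFC.sqrt A * CFC.sqrt D) = 0 := by
    rw [conjTranspose_mul, hSH.eq, hRH.eq]
    calc CFC.sqrt D * CFC.sqrt A * (CFC.sqrt A * CFC.sqrt D)
        = CFC.sqrt D * (CFC.sqrt A * CFC.sqrt A) * CFC.sqrt D := by noncomm_ring
      _ = 0 := by rw [hR, hz]
  have hz3 : CFC.sqrt A * CFC.sqrt D = 0 := by
    rwa [conjTranspose_mul_self_eq_zero] at hz2
  calc A * D = (CFC.sqrt A * CFC.sqrt A) * (CFC.sqrt D * CFC.sqrt D) := by rw [hR, hS]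
    _ = CFC.sqrt A * (CFC.sqrt A * CFC.sqrt D) * CFC.sqrt D := by noncomm_ring
    _ = 0 := by rw [hz3, mul_zero, zero_mul]

private lemma trace_vvstar' (v : Fin n → ℂ) :
    (vecMulVec v (star v)).trace = star v ⬝ᵥ v := by
  rw [Matrix.trace, dotProduct_comm]
  simp [Matrix.diag, vecMulVec_apply, dotProduct]

private lemma vvstar_mul_vvstar' (v : Fin n → ℂ) (hv : star v ⬝ᵥ v = 1) :
    vecMulVec v (star v) * vecMulVec v (star v) = vecMulVec v (star v) := by
  ext k l
  have h1 : ∑ m, (v k * star v m) * (v m * star v l)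
      = (v k * star v l) * (star v ⬝ᵥ v) := by
    rw [dotProduct, Finset.mul_sum]
    exact Finset.sum_congr rfl fun m _ => by simp only [Pi.star_apply]; ring
  simp only [mul_apply, vecMulVec_apply, Pi.star_apply] at h1 ⊢
  rw [h1, hv, mul_one]

private lemma vvstar_conjTranspose' (v : Fin n → ℂ) :
    (vecMulVec v (star v))ᴴ = vecMulVec v (star v) := by
  ext k l
  simp [conjTranspose_apply, vecMulVec_apply, mul_comm]

end Aux

/-- For nonzero positive semidefinite `n × n` complex matrices `B`, `C` (with
`n ≥ 1`), the trace inequality is saturated, `Tr(BC) = Tr(B) * Tr(C)`, if and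
only if `B` and `C` are positive scalar multiples of a common rank-one
orthogonal projection `v vᴴ` determined by a unit vector `v`. -/
theorem trace_mul_eq_trace_mul_trace_iff
    (n : ℕ) (hn : 1 ≤ n) (B C : Matrix (Fin n) (Fin n) ℂ)
    (hB : B.PosSemidef) (hC : C.PosSemidef) (hB0 : B ≠ 0) (hC0 : C ≠ 0) :
    (B * C).trace = B.trace * C.trace ↔
      ∃ (v : Fin n → ℂ) (β γ : ℝ), star v ⬝ᵥ v = 1 ∧ 0 < β ∧ 0 < γ ∧
        B = (β : ℂ) • vecMulVec v (star v) ∧ C = (γ : ℂ) • vecMulVec v (star v) := by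
  constructor
  · intro h
    obtain ⟨b, hb, htB⟩ := psd_trace_pos' hB hB0
    obtain ⟨c, hc, htC⟩ := psd_trace_pos' hC hC0
    have hb0 : (b : ℂ) ≠ 0 := by exact_mod_cast hb.ne'
    have hc0 : (c : ℂ) ≠ 0 := by exact_mod_cast hc.ne'
    -- B * C = Tr C • B
    have hBC : B * C = C.trace • B := by
      have hD := smul_one_sub_psd' hC
      have htBD : (B * (C.trace • (1 : Matrix (Fin n) (Fin n) ℂ) - C)).trace = 0 := by
        rw [mul_sub, trace_sub, Matrix.mul_smul, mul_one, trace_smul, h, smul_eq_mul]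
        ring
      have := mul_eq_zero_of_trace_mul_zero' hB hD htBD
      rw [mul_sub, Matrix.mul_smul, mul_one, sub_eq_zero] at this
      exact this.symm
    -- C * B = Tr B • C
    have hCB : C * B = B.trace • C := by
      have hD := smul_one_sub_psd' hB
      have htCB : (C * (B.trace • (1 : Matrix (Fin n) (Fin n) ℂ) - B)).trace = 0 := by
        rw [mul_sub, trace_sub, Matrix.mul_smul, mul_one, trace_smul, trace_mul_comm, h,
          smul_eq_mul]
        ring
      have := mul_eq_zero_of_trace_mul_zero' hC hD htCB
      rw [mul_sub, Matrix.mul_smul, mul_one, sub_eq_zero] at this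
      exact this.symm
    -- Tr C • B = Tr B • C
    have key : (c : ℂ) • B = (b : ℂ) • C := by
      have h1 := congrArg conjTranspose hCB
      rw [conjTranspose_mul, conjTranspose_smul, hB.1.eq, hC.1.eq, htB,
        Complex.star_def, Complex.conj_ofReal, hBC, htC] at h1
      exact h1
    have hCeq : C = (b : ℂ)⁻¹ • ((c : ℂ) • B) := by
      rw [eq_inv_smul_iff₀ hb0]
      exact key.symm
    -- B * B = Tr B • B
    have hBB : B * B = (b : ℂ) • B := by
      have h2 : B * C = (c : ℂ) • B := by rw [hBC, htC]
      rw [hCeq, Matrix.mul_smul, Matrix.mul_smul, smul_smul] at h2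
      have hbc : ((b : ℂ)⁻¹ * (c : ℂ)) ≠ 0 := mul_ne_zero (inv_ne_zero hb0) hc0
      have h3 : B * B = ((b : ℂ)⁻¹ * (c : ℂ))⁻¹ • ((c : ℂ) • B) := by
        rw [eq_inv_smul_iff₀ hbc]; exact h2
      rw [h3, smul_smul]
      congr 1
      field_simp
    -- find a nonzero diagonal entry
    obtain ⟨j, hj⟩ : ∃ j, B j j ≠ 0 := by
      by_contra hcon
      push_neg at hcon
      have hz : B.trace = 0 := by
        simp [Matrix.trace, Matrix.diag, hcon]
      rw [htB] at hz
      have hz' : (b : ℝ) = 0 := by exact_mod_cast hz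
      exact hb.ne' hz'
    set u : Fin n → ℂ := fun k => B k j with hu
    have hu0 : u j ≠ 0 := hj
    have hBu : B *ᵥ u = (b : ℂ) • u := by
      funext k
      have e1 : (B *ᵥ u) k = (B * B) k j := by
        simp [Matrix.mulVec, dotProduct, Matrix.mul_apply, hu]
      rw [e1, hBB]
      simp [hu]
    set r : ℝ := ∑ k, Complex.normSq (u k) with hrdef
    have hr : 0 < r :=
      Finset.sum_pos' (fun k _ => Complex.normSq_nonneg _)
        ⟨j, Finset.mem_univ j, Complex.normSq_pos.2 hu0⟩
    set s : ℝ := Real.sqrt r with hsdef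
    have hs0 : 0 < s := Real.sqrt_pos.2 hr
    have hss : s * s = r := Real.mul_self_sqrt hr.le
    set v : Fin n → ℂ := fun k => ((s⁻¹ : ℝ) : ℂ) * u k with hvdef
    have hterm : ∀ k, (star v) k * v k = ((s⁻¹ * s⁻¹ * Complex.normSq (u k) : ℝ) : ℂ) := by
      intro k
      simp only [hvdef, Pi.star_apply]
      calc star (((s⁻¹ : ℝ) : ℂ) * u k) * (((s⁻¹ : ℝ) : ℂ) * u k)
          = (((s⁻¹ : ℝ) : ℂ) * ((s⁻¹ : ℝ) : ℂ)) * ((starRingEnd ℂ) (u k) * u k) := by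
            rw [Complex.star_def, _root_.map_mul, Complex.conj_ofReal]; ring
        _ = ((s⁻¹ * s⁻¹ * Complex.normSq (u k) : ℝ) : ℂ) := by
            rw [← Complex.normSq_eq_conj_mul_self]; push_cast; ring
    have hv1 : star v ⬝ᵥ v = 1 := by
      have h2 : star v ⬝ᵥ v = ((s⁻¹ * s⁻¹ * r : ℝ) : ℂ) := by
        rw [dotProduct, hrdef, Finset.mul_sum, Complex.ofReal_sum]
        exact Finset.sum_congr rfl fun k _ => hterm k
      have h3 : s⁻¹ * s⁻¹ * r = 1 := by
        rw [← hss]; field_simp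
      rw [h2, h3, Complex.ofReal_one]
    have hBv : B *ᵥ v = (b : ℂ) • v := by
      have hveq : v = ((s⁻¹ : ℝ) : ℂ) • u := rfl
      rw [hveq, Matrix.mulVec_smul, hBu, smul_comm]
    -- B * vv* = b • vv*
    have hBV : B * vecMulVec v (star v) = (b : ℂ) • vecMulVec v (star v) := by
      ext k l
      have h4 : (B * vecMulVec v (star v)) k l = (B *ᵥ v) k * (star v) l := by
        simp only [Matrix.mul_apply, Matrix.mulVec, dotProduct, vecMulVec_apply,
          Finset.sum_mul]
        exact Finset.sum_congr rfl fun m _ => by ring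
      rw [h4, hBv, Matrix.smul_apply, vecMulVec_apply, Pi.smul_apply, smul_eq_mul, smul_eq_mul]
      ring
    have hVB : vecMulVec v (star v) * B = (b : ℂ) • vecMulVec v (star v) := by
      have h5 := congrArg conjTranspose hBV
      rw [conjTranspose_mul, hB.1.eq, vvstar_conjTranspose', conjTranspose_smul,
        vvstar_conjTranspose', Complex.star_def, Complex.conj_ofReal] at h5
      exact h5
    have hVV := vvstar_mul_vvstar' v hv1
    set Q : Matrix (Fin n) (Fin n) ℂ := B - (b : ℂ) • vecMulVec v (star v) with hQdef
    have hQ2 : Q * Q = (b : ℂ) • Q := by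
      rw [hQdef]
      rw [sub_mul, mul_sub, mul_sub, Matrix.mul_smul, Matrix.smul_mul, Matrix.smul_mul,
        Matrix.mul_smul, hBB, hBV, hVB, hVV, smul_sub]
      simp [smul_smul]
    have hQH : Qᴴ = Q := by
      rw [hQdef, conjTranspose_sub, hB.1.eq, conjTranspose_smul, vvstar_conjTranspose',
        Complex.star_def, Complex.conj_ofReal]
    have hQ'H : ((b : ℂ)⁻¹ • Q)ᴴ = (b : ℂ)⁻¹ • Q := by
      rw [conjTranspose_smul, hQH, Complex.star_def, map_inv₀, Complex.conj_ofReal]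
    have hQ'Q' : ((b : ℂ)⁻¹ • Q)ᴴ * ((b : ℂ)⁻¹ • Q) = (b : ℂ)⁻¹ • Q := by
      rw [hQ'H, Matrix.smul_mul, Matrix.mul_smul, hQ2, smul_smul, smul_smul]
      congr 1
      field_simp
    have hPSD : ((b : ℂ)⁻¹ • Q).PosSemidef := by
      rw [← hQ'Q']
      exact posSemidef_conjTranspose_mul_self _
    have htrQ : ((b : ℂ)⁻¹ • Q).trace = 0 := by
      rw [trace_smul, hQdef, trace_sub, trace_smul, trace_vvstar', hv1, htB]
      simp
    have hQ0 : (b : ℂ)⁻¹ • Q = 0 := psd_trace_zero' hPSD htrQ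
    have hQzero : Q = 0 := by
      have h6 := congrArg (fun M => (b : ℂ) • M) hQ0
      simpa [smul_smul, mul_inv_cancel₀ hb0] using h6
    have hBfinal : B = (b : ℂ) • vecMulVec v (star v) := by
      rw [hQdef] at hQzero
      rwa [sub_eq_zero] at hQzero
    have hCfinal : C = (c : ℂ) • vecMulVec v (star v) := by
      rw [hCeq, hBfinal, smul_smul, smul_smul]
      congr 1
      field_simp
    exact ⟨v, b, c, hv1, hb, hc, hBfinal, hCfinal⟩
  · rintro ⟨v, β, γ, hv, hβ, hγ, rfl, rfl⟩
    rw [Matrix.smul_mul, Matrix.mul_smul, vvstar_mul_vvstar' v hv, smul_smul,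
      trace_smul, trace_smul, trace_smul, trace_vvstar', hv]
    simp only [smul_eq_mul, mul_one]
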